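/- arXiv:1812.10182 — 2 statements merged into one kernel-verified Lean document; each statement's English description precedes it below -/
import Mathlib

section
/- Integration by parts for the normalized variables: let 0 < u_- < u_+ < 1. There exists C = C_{u_-,u_+} > 0 such that the following holds. Let ν = ν_{u(·)} be the product Bernoulli measure with means u, let x, y ∈ T_N^d with |x−y| = 1 and u_x, u_y ∈ [u_-,u_+], let h satisfy h(η^{x,y}) = h(η) for all η, and let f be a probability density with respect to ν. Then ∫ h (ω_y − ω_x) f dν = ∫ h(η) (η_x/χ(u_x)) ( f(η^{x,y}) − f(η) ) dν + R₂ with |R₂| ≤ C |u_x − u_y| ∫ |h| f dν, where ω_z = (η_z − u_z)/χ(u_z) and χ(ρ) = ρ(1−ρ). -/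
open Finset

/-- The discrete torus `T_N^d = (ℤ/Nℤ)^d`. -/
abbrev Torus (d N : ℕ) := Fin d → ZMod N

/-- The configuration space `X_N = {0,1}^{T_N^d}`. -/
abbrev Config (d N : ℕ) := Torus d N → Bool

/-- The value in `{0,1} ⊂ ℝ` of an occupation variable. -/
noncomputable def bval : Bool → ℝ := fun b => if b then 1 else 0

/-- The `i`-th unit vector `e_i` of the discrete torus. -/
def uvec (d N : ℕ) (i : Fin d) : Torus d N := fun j => if j = i then 1 else 0

/-- `swapC x y η = η^{x,y}`, the configuration with the values at `x` and `y` exchanged. -/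
def swapC {d N : ℕ} (x y : Torus d N) (η : Config d N) : Config d N :=
  fun z => η (Equiv.swap x y z)

/-- The product Bernoulli measure with means `u`. -/
noncomputable def bern {d N : ℕ} [NeZero N] (u : Torus d N → ℝ) (η : Config d N) : ℝ :=
  ∏ x : Torus d N, (if η x then u x else 1 - u x)


/-- `χ(ρ) = ρ(1-ρ)`. -/
noncomputable def chi (ρ : ℝ) : ℝ := ρ * (1 - ρ)

/-- `ω_z = (η_z - u_z)/χ(u_z)`. -/
noncomputable def omg {d N : ℕ} (u : Torus d N → ℝ) (z : Torus d N) (η : Config d N) : ℝ :=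
  (bval (η z) - u z) / chi (u z)

set_option maxHeartbeats 1000000

noncomputable def Vfun (a b : ℝ) (s t : Bool) : ℝ :=
  (bval t - b)/(b*(1-b)) - (bval s - a)/(a*(1-a)) + bval s/(a*(1-a))
    - bval t/(a*(1-a)) * (((if t then a else 1-a) * (if s then b else 1-b)) /
        ((if s then a else 1-a) * (if t then b else 1-b)))

lemma Vbound (um up a b : ℝ) (h0m : 0 < um) (hmp : um < up) (hp1 : up < 1)
    (ha1 : um ≤ a) (ha2 : a ≤ up) (hb1 : um ≤ b) (hb2 : b ≤ up) (s t : Bool) :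
    |Vfun a b s t| ≤ 2/(um^2*(1-up)^2) * |a-b| := by
  have h0a : 0 < a := lt_of_lt_of_le h0m ha1
  have h1a : a < 1 := lt_of_le_of_lt ha2 hp1
  have h0b : 0 < b := lt_of_lt_of_le h0m hb1
  have h1b : b < 1 := lt_of_le_of_lt hb2 hp1
  have hup : 0 < 1 - up := by linarith
  have h1a' : 0 < 1 - a := by linarith
  have h1b' : 0 < 1 - b := by linarith
  have H1 : (1-up)*(1-up) ≤ (1-a)*(1-b) := by nlinarith
  have H2 : um*um ≤ a*b := by nlinarith
  have ha0 : a ≠ 0 := ne_of_gt h0a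
  have hb0 : b ≠ 0 := ne_of_gt h0b
  have ha1' : (1:ℝ) - a ≠ 0 := ne_of_gt h1a'
  have hb1'' : (1:ℝ) - b ≠ 0 := ne_of_gt h1b'
  cases s <;> cases t
  · -- s = false, t = false
    have hval : Vfun a b false false = (a-b) * (1/((1-a)*(1-b))) := by
      simp only [Vfun, bval, Bool.false_eq_true, if_false]
      field_simp
      ring
    rw [hval, abs_mul, abs_of_pos (show (0:ℝ) < 1/((1-a)*(1-b)) by positivity),
      mul_comm (2/(um^2*(1-up)^2))]
    apply mul_le_mul_of_nonneg_left _ (abs_nonneg _)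
    rw [div_le_div_iff₀ (by positivity) (by positivity)]
    have e1 : um^2 ≤ 1 := by nlinarith
    have e2 : um^2*(1-up)^2 ≤ (1-up)^2 := by nlinarith [sq_nonneg (1-up)]
    have e3 : (1-up)^2 = (1-up)*(1-up) := by ring
    nlinarith [e2, H1, mul_pos h1a' h1b']
  · -- s = false, t = true
    have hval : Vfun a b false true = (a-b) * (-((2-a)/((1-a)^2*b))) := by
      simp only [Vfun, bval, Bool.false_eq_true, if_false, if_true]
      field_simp
      ring
    have h2a : (0:ℝ) < 2 - a := by linarith
    have hrpos : (0:ℝ) < (2-a)/((1-a)^2*b) := by positivity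
    rw [hval, abs_mul, abs_neg, abs_of_pos hrpos, mul_comm (2/(um^2*(1-up)^2))]
    apply mul_le_mul_of_nonneg_left _ (abs_nonneg _)
    rw [div_le_div_iff₀ (by positivity) (by positivity)]
    have hb' : um*um ≤ b := by nlinarith
    have hA : (1-up)*(1-up) ≤ (1-a)*(1-a) := by nlinarith
    have H3 : (um*um)*((1-up)*(1-up)) ≤ b*((1-a)*(1-a)) :=
      mul_le_mul hb' hA (by positivity) h0b.le
    nlinarith [H3, mul_pos (mul_pos (mul_pos h0m h0m) hup) hup, h0a.le]
  · -- s = true, t = false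
    have hval : Vfun a b true false = (a-b) * (1/((1-a)*(1-b))) := by
      simp only [Vfun, bval, Bool.false_eq_true, if_false, if_true]
      field_simp
      ring
    rw [hval, abs_mul, abs_of_pos (show (0:ℝ) < 1/((1-a)*(1-b)) by positivity),
      mul_comm (2/(um^2*(1-up)^2))]
    apply mul_le_mul_of_nonneg_left _ (abs_nonneg _)
    rw [div_le_div_iff₀ (by positivity) (by positivity)]
    have e1 : um^2 ≤ 1 := by nlinarith
    have e2 : um^2*(1-up)^2 ≤ (1-up)^2 := by nlinarith [sq_nonneg (1-up)]
    have e3 : (1-up)^2 = (1-up)*(1-up) := by ring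
    nlinarith [e2, H1, mul_pos h1a' h1b']
  · -- s = true, t = true
    have hval : Vfun a b true true = (a-b) * (1/(a*b)) := by
      simp only [Vfun, bval, if_true]
      rw [div_self (by positivity : a*b ≠ 0)]
      field_simp
      ring
    rw [hval, abs_mul, abs_of_pos (show (0:ℝ) < 1/(a*b) by positivity),
      mul_comm (2/(um^2*(1-up)^2))]
    apply mul_le_mul_of_nonneg_left _ (abs_nonneg _)
    rw [div_le_div_iff₀ (by positivity) (by positivity)]
    have e1 : (1-up)^2 ≤ 1 := by nlinarith
    have e2 : um^2*(1-up)^2 ≤ um^2 := by nlinarith [sq_nonneg um]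
    have e3 : um^2 = um*um := by ring
    nlinarith [e2, H2, mul_pos h0a h0b]


/-- Lemma 3.4 (1) (Integration by parts for the normalized variables): there is
`C = C_{u_-,u_+} > 0` such that for every Bernoulli measure `ν = ν_{u(·)}`, every
nearest-neighbour pair `x,y` with `u_x, u_y ∈ [u_-,u_+]`, every swap-invariant `h` and every
probability density `f` w.r.t. `ν`,
`∫ h (ω_y - ω_x) f dν = ∫ h (η_x/χ(u_x)) (f(η^{x,y}) - f(η)) dν + R₂` with
`|R₂| ≤ C |u_x - u_y| ∫ |h| f dν`. -/
theorem integration_by_parts_omega (um up : ℝ) (h0m : 0 < um) (hmp : um < up) (hp1 : up < 1) :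
    ∃ C : ℝ, 0 < C ∧
      ∀ (d N : ℕ) [NeZero N], 1 ≤ d →
      ∀ (u : Torus d N → ℝ), (∀ z, u z ∈ Set.Icc (0:ℝ) 1) →
      ∀ (x y : Torus d N), (∃ i : Fin d, y = x + uvec d N i ∨ y = x - uvec d N i) →
      u x ∈ Set.Icc um up → u y ∈ Set.Icc um up →
      ∀ (h : Config d N → ℝ), (∀ η, h (swapC x y η) = h η) →
      ∀ (f : Config d N → ℝ), (∀ η, 0 ≤ f η) →
        (∑ η : Config d N, f η * bern u η = 1) →
        |(∑ η : Config d N, h η * (omg u y η - omg u x η) * f η * bern u η)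
          - ∑ η : Config d N, h η * (bval (η x) / chi (u x)) * (f (swapC x y η) - f η) * bern u η|
          ≤ C * |u x - u y| * ∑ η : Config d N, |h η| * f η * bern u η := by
  have hup : 0 < 1 - up := by linarith
  refine ⟨2/(um^2*(1-up)^2), by positivity, ?_⟩
  intro d N _ hd u hu x y hxy hux huy h hsym f hf hf1
  by_cases hxe : x = y
  · subst hxe
    have hsw : ∀ η : Config d N, swapC x x η = η := by
      intro η; funext z; simp [swapC]
    simp [hsw, sub_self]
  · -- basic positivity
    have h0a : 0 < u x := lt_of_lt_of_le h0m hux.1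
    have h1a : u x < 1 := lt_of_le_of_lt hux.2 hp1
    have h0b : 0 < u y := lt_of_lt_of_le h0m huy.1
    have h1b : u y < 1 := lt_of_le_of_lt huy.2 hp1
    have hbnn : ∀ η : Config d N, 0 ≤ bern u η := by
      intro η
      apply Finset.prod_nonneg
      intro z _
      rcases hz : η z with _ | _ <;> simp [hz] <;> linarith [(hu z).1, (hu z).2]
    -- swap facts
    have hswsw : ∀ η : Config d N, swapC x y (swapC x y η) = η := by
      intro η; funext z; simp [swapC]
    have hsx : ∀ η : Config d N, (swapC x y η) x = η y := by
      intro η; simp [swapC]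
    have hsy : ∀ η : Config d N, (swapC x y η) y = η x := by
      intro η; simp [swapC]
    -- bern swap relation
    have hne1 : ∀ c : Bool, (if c then u x else 1 - u x) ≠ 0 := by
      intro c; rcases c <;> simp <;> linarith
    have hne2 : ∀ c : Bool, (if c then u y else 1 - u y) ≠ 0 := by
      intro c; rcases c <;> simp <;> linarith
    have hbernswap : ∀ η : Config d N, bern u (swapC x y η)
        = bern u η * (((if η y then u x else 1 - u x) * (if η x then u y else 1 - u y)) /
            ((if η x then u x else 1 - u x) * (if η y then u y else 1 - u y))) := by
      intro η
      have hym : y ∈ (univ : Finset (Torus d N)).erase x := by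
        simp [Finset.mem_erase, Ne.symm hxe]
      have fact : ∀ κ : Config d N, bern u κ
          = (if κ x then u x else 1 - u x) * ((if κ y then u y else 1 - u y) *
              ∏ z ∈ ((univ : Finset (Torus d N)).erase x).erase y, (if κ z then u z else 1 - u z)) := by
        intro κ
        rw [bern, ← Finset.mul_prod_erase univ _ (mem_univ x),
          ← Finset.mul_prod_erase _ _ hym]
      have hrest : (∏ z ∈ ((univ : Finset (Torus d N)).erase x).erase y,
            (if (swapC x y η) z then u z else 1 - u z))
          = ∏ z ∈ ((univ : Finset (Torus d N)).erase x).erase y,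
            (if η z then u z else 1 - u z) := by
        apply Finset.prod_congr rfl
        intro z hz
        rw [Finset.mem_erase, Finset.mem_erase] at hz
        rw [show (swapC x y η) z = η z by
          simp [swapC, Equiv.swap_apply_of_ne_of_ne hz.2.1 hz.1]]
      rw [fact (swapC x y η), fact η, hrest, hsx, hsy]
      have hax : u x ≠ 0 := ne_of_gt h0a
      have hax' : (1:ℝ) - u x ≠ 0 := by linarith
      have hay : u y ≠ 0 := ne_of_gt h0b
      have hay' : (1:ℝ) - u y ≠ 0 := by linarith
      rcases hx : η x <;> rcases hy : η y <;>
        simp only [hx, hy, if_true, if_false, Bool.false_eq_true] <;>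
        field_simp <;> ring
    -- reindexing
    let e : Config d N ≃ Config d N := ⟨swapC x y, swapC x y, hswsw, hswsw⟩
    have hreindex : (∑ η : Config d N, h η * (bval (η x) / chi (u x)) * f (swapC x y η) * bern u η)
        = ∑ η : Config d N, h η * (bval (η y) / chi (u x)) * f η * bern u (swapC x y η) := by
      refine (Fintype.sum_equiv e _ _ ?_).symm
      intro η
      show h η * (bval (η y) / chi (u x)) * f η * bern u (swapC x y η)
        = h (swapC x y η) * (bval ((swapC x y η) x) / chi (u x)) * f (swapC x y (swapC x y η))
            * bern u (swapC x y η)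
      rw [hsym η, hsx η, hswsw η]
    -- split the second sum
    have hB : (∑ η : Config d N, h η * (bval (η x) / chi (u x)) * (f (swapC x y η) - f η) * bern u η)
        = (∑ η : Config d N, h η * (bval (η x) / chi (u x)) * f (swapC x y η) * bern u η)
          - ∑ η : Config d N, h η * (bval (η x) / chi (u x)) * f η * bern u η := by
      rw [← Finset.sum_sub_distrib]
      exact Finset.sum_congr rfl fun η _ => by ring
    -- combine into a single sum
    have hdiff : (∑ η : Config d N, h η * (omg u y η - omg u x η) * f η * bern u η)
          - (∑ η : Config d N, h η * (bval (η x) / chi (u x)) * (f (swapC x y η) - f η) * bern u η)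
        = ∑ η : Config d N, h η * f η * bern u η * Vfun (u x) (u y) (η x) (η y) := by
      rw [hB, hreindex, ← Finset.sum_sub_distrib, ← Finset.sum_sub_distrib]
      apply Finset.sum_congr rfl
      intro η _
      rw [hbernswap η]
      simp only [omg, chi, Vfun]
      ring
    rw [hdiff]
    calc |∑ η : Config d N, h η * f η * bern u η * Vfun (u x) (u y) (η x) (η y)|
        ≤ ∑ η : Config d N, |h η * f η * bern u η * Vfun (u x) (u y) (η x) (η y)| :=
          Finset.abs_sum_le_sum_abs _ _
      _ ≤ ∑ η : Config d N, |h η| * f η * bern u η * (2/(um^2*(1-up)^2) * |u x - u y|) := by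
          apply Finset.sum_le_sum
          intro η _
          have h1 : |h η * f η * bern u η| = |h η| * f η * bern u η := by
            rw [abs_mul, abs_mul, abs_of_nonneg (hf η), abs_of_nonneg (hbnn η)]
          rw [abs_mul, h1]
          exact mul_le_mul_of_nonneg_left
            (Vbound um up (u x) (u y) h0m hmp hp1 hux.1 hux.2 huy.1 huy.2 (η x) (η y))
            (mul_nonneg (mul_nonneg (abs_nonneg _) (hf η)) (hbnn η))
      _ = 2/(um^2*(1-up)^2) * |u x - u y| * ∑ η : Config d N, |h η| * f η * bern u η := by
          rw [← Finset.sum_mul, mul_comm]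
end

section
/- Dirichlet form bound: let 0 < u_- < u_+ < 1. There exists C = C_{u_-,u_+} > 0 such that for every β > 0 the following holds. Let ν = ν_{u(·)} be the product Bernoulli measure with means u, let x ∈ T_N^d and y = x + e_j with u_x, u_y ∈ [u_-,u_+], let h satisfy h(η^{x,y}) = h(η) for all η, and let f be a probability density with respect to ν. Then ∫ h (ω_x − ω_y) f dν ≤ β D_{K;x,y}(√f; ν) + (C/β) ∫ h² f dν + R, where D_{K;x,y}(g;ν) = (1/4) ∫ (g(η^{x,y}) − g(η))² dν and the error satisfies |R| ≤ C |u_x − u_y| ∫ |h| f dν. -/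
open Finset

/-- The piece `D_{K;x,y}(g;ν) = (1/4) ∫ (g(η^{x,y}) - g(η))² dν` of the Kawasaki
Dirichlet form on the bond `{x,y}`. -/
noncomputable def dirKxy {d N : ℕ} [NeZero N] (x y : Torus d N)
    (g : Config d N → ℝ) (ν : Config d N → ℝ) : ℝ :=
  (1/4) * ∑ η : Config d N, (g (swapC x y η) - g η)^2 * ν η

lemma swapC_invol {d N : ℕ} (x y : Torus d N) : Function.Involutive (swapC x y) := by
  intro η; funext z; simp [swapC, Equiv.swap_apply_self]

lemma sum_swapC {d N : ℕ} [NeZero N] (x y : Torus d N) (G : Config d N → ℝ) :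
    ∑ η : Config d N, G (swapC x y η) = ∑ η : Config d N, G η :=
  Equiv.sum_comp ((swapC_invol x y).toPerm _) G

lemma swapC_x {d N : ℕ} (x y : Torus d N) (η : Config d N) : swapC x y η x = η y := by
  simp [swapC]

lemma swapC_y {d N : ℕ} (x y : Torus d N) (η : Config d N) : swapC x y η y = η x := by
  simp [swapC]

lemma swapC_other {d N : ℕ} (x y z : Torus d N) (η : Config d N) (hx : z ≠ x) (hy : z ≠ y) :
    swapC x y η z = η z := by
  simp [swapC, Equiv.swap_apply_of_ne_of_ne hx hy]

lemma bern_factor {d N : ℕ} [NeZero N] (u : Torus d N → ℝ) (x y : Torus d N) (hxy : x ≠ y)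
    (η : Config d N) :
    bern u η = (if η x then u x else 1 - u x) *
      ((if η y then u y else 1 - u y) *
        ∏ z ∈ (Finset.univ.erase x).erase y, (if η z then u z else 1 - u z)) := by
  rw [bern, ← Finset.mul_prod_erase Finset.univ _ (Finset.mem_univ x),
    ← Finset.mul_prod_erase (Finset.univ.erase x) _
      (Finset.mem_erase.mpr ⟨Ne.symm hxy, Finset.mem_univ y⟩)]

set_option maxHeartbeats 4000000 in
/-- Lemma 3.5 (Dirichlet form bound): there is `C = C_{u_-,u_+} > 0` such that for every
`β > 0`, every Bernoulli measure `ν = ν_{u(·)}`, every bond `{x, x+e_j}` with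
`u_x, u_y ∈ [u_-,u_+]`, every swap-invariant `h` and every probability density `f`,
`∫ h (ω_x - ω_y) f dν ≤ β D_{K;x,y}(√f;ν) + (C/β) ∫ h² f dν + R` with
`|R| ≤ C |u_x - u_y| ∫ |h| f dν`. -/
theorem dirichlet_form_bound (um up : ℝ) (h0m : 0 < um) (hmp : um < up) (hp1 : up < 1) :
    ∃ C : ℝ, 0 < C ∧ ∀ β : ℝ, 0 < β →
      ∀ (d N : ℕ) [NeZero N], 1 ≤ d →
      ∀ (u : Torus d N → ℝ), (∀ z, u z ∈ Set.Icc (0:ℝ) 1) →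
      ∀ (x : Torus d N) (j : Fin d), ∀ y : Torus d N, y = x + uvec d N j →
      u x ∈ Set.Icc um up → u y ∈ Set.Icc um up →
      ∀ (h : Config d N → ℝ), (∀ η, h (swapC x y η) = h η) →
      ∀ (f : Config d N → ℝ), (∀ η, 0 ≤ f η) →
        (∑ η : Config d N, f η * bern u η = 1) →
        ∃ R : ℝ,
          (∑ η : Config d N, h η * (omg u x η - omg u y η) * f η * bern u η)
            ≤ β * dirKxy x y (fun η => Real.sqrt (f η)) (bern u)
              + (C / β) * ∑ η : Config d N, (h η)^2 * f η * bern u η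
              + R
          ∧ |R| ≤ C * |u x - u y| * ∑ η : Config d N, |h η| * f η * bern u η := by
  set m : ℝ := um * (1 - up) with hmdef
  have hm0 : 0 < m := by
    have : 0 < 1 - up := by linarith
    positivity
  have hm1 : m ≤ 1 := by nlinarith
  refine ⟨4 / m^6, by positivity, ?_⟩
  intro β hβ d N _ hd u hu x j y hyx hux huy h hsw f hf hf1
  set C : ℝ := 4 / m^6 with hCdef
  have hC0 : 0 < C := by positivity
  obtain ⟨huxm, huxp⟩ := hux
  obtain ⟨huym, huyp⟩ := huy
  have hbnn : ∀ η : Config d N, 0 ≤ bern u η := by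
    intro η
    apply Finset.prod_nonneg
    intro z _
    rcases hu z with ⟨h0, h1⟩
    split <;> linarith
  -- trivial case x = y
  by_cases hxy : x = y
  · subst hxy
    refine ⟨0, ?_, by simp⟩
    have hz : (∑ η : Config d N, h η * (omg u x η - omg u x η) * f η * bern u η) = 0 := by
      simp
    rw [hz, add_zero]
    have hD : 0 ≤ dirKxy x x (fun η => Real.sqrt (f η)) (bern u) := by
      rw [dirKxy]
      have : 0 ≤ ∑ η : Config d N,
          ((fun η => Real.sqrt (f η)) (swapC x x η) - (fun η => Real.sqrt (f η)) η)^2 * bern u η :=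
        Finset.sum_nonneg fun η _ => mul_nonneg (sq_nonneg _) (hbnn η)
      linarith
    have hSig : 0 ≤ ∑ η : Config d N, (h η)^2 * f η * bern u η :=
      Finset.sum_nonneg fun η _ => mul_nonneg (mul_nonneg (sq_nonneg _) (hf η)) (hbnn η)
    have h1 : 0 ≤ β * dirKxy x x (fun η => Real.sqrt (f η)) (bern u) :=
      mul_nonneg hβ.le hD
    have h2 : 0 ≤ (C / β) * ∑ η : Config d N, (h η)^2 * f η * bern u η :=
      mul_nonneg (by positivity) hSig
    linarith
  -- main case
  -- basic bounds
  have hx0 : 0 < u x := lt_of_lt_of_le h0m huxm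
  have hx1 : u x < 1 := lt_of_le_of_lt huxp hp1
  have hy0 : 0 < u y := lt_of_lt_of_le h0m huym
  have hy1 : u y < 1 := lt_of_le_of_lt huyp hp1
  have hmx : m ≤ u x := by nlinarith
  have hmx' : m ≤ 1 - u x := by nlinarith
  have hmy : m ≤ u y := by nlinarith
  have hmy' : m ≤ 1 - u y := by nlinarith
  have hxne : u x ≠ 0 := ne_of_gt hx0
  have hx1ne : 1 - u x ≠ 0 := by linarith
  have hyne : u y ≠ 0 := ne_of_gt hy0
  have hy1ne : 1 - u y ≠ 0 := by linarith
  have hχx : m^2 ≤ chi (u x) := by rw [chi]; nlinarith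
  have hχy : m^2 ≤ chi (u y) := by rw [chi]; nlinarith
  have hχx0 : 0 < chi (u x) := by rw [chi]; nlinarith
  have hχy0 : 0 < chi (u y) := by rw [chi]; nlinarith
  have hm2 : (0:ℝ) < m^2 := by positivity
  -- factorization
  set K : Config d N → ℝ :=
    fun η => ∏ z ∈ (Finset.univ.erase x).erase y, (if η z then u z else 1 - u z) with hKdef
  have hKnn : ∀ η, 0 ≤ K η := by
    intro η
    apply Finset.prod_nonneg
    intro z _
    rcases hu z with ⟨h0, h1⟩
    split <;> linarith
  have hfac : ∀ η : Config d N,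
      bern u η = (if η x then u x else 1 - u x) * ((if η y then u y else 1 - u y) * K η) :=
    fun η => bern_factor u x y hxy η
  have hKswap : ∀ η : Config d N, K (swapC x y η) = K η := by
    intro η
    apply Finset.prod_congr rfl
    intro z hz
    rw [Finset.mem_erase] at hz
    obtain ⟨hzy, hz'⟩ := hz
    rw [Finset.mem_erase] at hz'
    rw [swapC_other x y z η hz'.1 hzy]
  have hfacT : ∀ η : Config d N,
      bern u (swapC x y η)
        = (if η y then u x else 1 - u x) * ((if η x then u y else 1 - u y) * K η) := by
    intro η
    rw [bern_factor u x y hxy (swapC x y η), swapC_x, swapC_y]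
    rw [show (∏ z ∈ (Finset.univ.erase x).erase y,
        (if swapC x y η z then u z else 1 - u z)) = K (swapC x y η) from rfl, hKswap]
  -- omega differences
  have hWT : ∀ η : Config d N,
      omg u x (swapC x y η) - omg u y (swapC x y η)
        = (bval (η y) - u x) / chi (u x) - (bval (η x) - u y) / chi (u y) := by
    intro η
    rw [omg, omg, swapC_x, swapC_y]
  have hWe : ∀ η : Config d N,
      omg u x η - omg u y η
        = (bval (η x) - u x) / chi (u x) - (bval (η y) - u y) / chi (u y) := fun η => rfl
  have hprod : ∀ a b : ℝ, m ≤ a → m ≤ b → ∀ k : ℝ, 0 ≤ k → m^2 * k ≤ a * (b * k) := by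
    intro a b ha hb k hk
    nlinarith [mul_nonneg (mul_nonneg (sub_nonneg.2 ha) (by linarith : (0:ℝ) ≤ b)) hk,
      mul_nonneg (mul_nonneg hm0.le (sub_nonneg.2 hb)) hk]
  have hKle : ∀ a b k : ℝ, 0 ≤ a → a ≤ 1 → 0 ≤ b → b ≤ 1 → 0 ≤ k → a * (b * k) ≤ k := by
    intro a b k ha ha1 hb hb1 hk
    have hab : a * b ≤ 1 := mul_le_one₀ ha1 hb hb1
    nlinarith [mul_nonneg hk (sub_nonneg.2 hab)]
  have hKge : ∀ a b k : ℝ, m ≤ a → m ≤ b → 0 ≤ k → k ≤ (1/m^2) * (a * (b * k)) := by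
    intro a b k ha hb hk
    have h2 : m^2 * k ≤ a * (b * k) := hprod a b ha hb k hk
    calc k = (1/m^2) * (m^2 * k) := by field_simp
      _ ≤ (1/m^2) * (a * (b * k)) := mul_le_mul_of_nonneg_left h2 (by positivity)
  -- claim E : the antisymmetry error
  have claimE : ∀ η : Config d N,
      |(omg u x η - omg u y η) * bern u η
        + (omg u x (swapC x y η) - omg u y (swapC x y η)) * bern u (swapC x y η)|
      ≤ (2/m^2) * |u x - u y| * bern u (swapC x y η) := by
    intro η
    rw [hWe, hWT, hfac, hfacT]
    have habs : ∀ s : ℝ, |2 * s * K η| = 2 * |s| * K η := by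
      intro s
      rw [abs_mul, abs_of_nonneg (hKnn η), abs_mul, abs_two]
    cases hhx : η x <;> cases hhy : η y <;>
      simp only [hhx, hhy, bval, if_true, if_false, Bool.false_eq_true, ite_true, ite_false]
    · -- false, false
      have e1 : ((0 - u x) / chi (u x) - (0 - u y) / chi (u y)) * ((1 - u x) * ((1 - u y) * K η))
          + ((0 - u x) / chi (u x) - (0 - u y) / chi (u y)) * ((1 - u x) * ((1 - u y) * K η))
          = 2 * (u y - u x) * K η := by
        rw [chi, chi]; field_simp; ring
      rw [e1, habs, abs_sub_comm (u y) (u x)]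
      calc 2 * |u x - u y| * K η
          = (2/m^2) * |u x - u y| * (m^2 * K η) := by field_simp
        _ ≤ (2/m^2) * |u x - u y| * ((1 - u x) * ((1 - u y) * K η)) := by
            apply mul_le_mul_of_nonneg_left (hprod _ _ hmx' hmy' _ (hKnn η)) (by positivity)
    · -- false, true
      have e1 : ((0 - u x) / chi (u x) - (1 - u y) / chi (u y)) * ((1 - u x) * (u y * K η))
          + ((1 - u x) / chi (u x) - (0 - u y) / chi (u y)) * (u x * ((1 - u y) * K η))
          = 2 * (u x - u y) * K η := by
        rw [chi, chi]; field_simp; ring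
      rw [e1, habs]
      calc 2 * |u x - u y| * K η
          = (2/m^2) * |u x - u y| * (m^2 * K η) := by field_simp
        _ ≤ (2/m^2) * |u x - u y| * (u x * ((1 - u y) * K η)) := by
            apply mul_le_mul_of_nonneg_left (hprod _ _ hmx hmy' _ (hKnn η)) (by positivity)
    · -- true, false
      have e1 : ((1 - u x) / chi (u x) - (0 - u y) / chi (u y)) * (u x * ((1 - u y) * K η))
          + ((0 - u x) / chi (u x) - (1 - u y) / chi (u y)) * ((1 - u x) * (u y * K η))
          = 2 * (u x - u y) * K η := by
        rw [chi, chi]; field_simp; ring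
      rw [e1, habs]
      calc 2 * |u x - u y| * K η
          = (2/m^2) * |u x - u y| * (m^2 * K η) := by field_simp
        _ ≤ (2/m^2) * |u x - u y| * ((1 - u x) * (u y * K η)) := by
            apply mul_le_mul_of_nonneg_left (hprod _ _ hmx' hmy _ (hKnn η)) (by positivity)
    · -- true, true
      have e1 : ((1 - u x) / chi (u x) - (1 - u y) / chi (u y)) * (u x * (u y * K η))
          + ((1 - u x) / chi (u x) - (1 - u y) / chi (u y)) * (u x * (u y * K η))
          = 2 * (u y - u x) * K η := by
        rw [chi, chi]; field_simp; ring
      rw [e1, habs]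
      rw [abs_sub_comm (u y) (u x)]
      calc 2 * |u x - u y| * K η
          = (2/m^2) * |u x - u y| * (m^2 * K η) := by field_simp
        _ ≤ (2/m^2) * |u x - u y| * (u x * (u y * K η)) := by
            apply mul_le_mul_of_nonneg_left (hprod _ _ hmx hmy _ (hKnn η)) (by positivity)
  -- claim ratio
  have claimRatio : ∀ η : Config d N, bern u η ≤ (1/m^2) * bern u (swapC x y η) := by
    intro η
    rw [hfac, hfacT]
    have h01x : (0:ℝ) ≤ u x ∧ u x ≤ 1 := ⟨hx0.le, hx1.le⟩
    cases hhx : η x <;> cases hhy : η y <;>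
      simp only [hhx, hhy, if_true, if_false, Bool.false_eq_true, ite_true, ite_false]
    · exact le_trans (hKle _ _ _ (by linarith) (by linarith) (by linarith) (by linarith) (hKnn η))
        (hKge _ _ _ hmx' hmy' (hKnn η))
    · exact le_trans (hKle _ _ _ (by linarith) (by linarith) (by linarith) (by linarith) (hKnn η))
        (hKge _ _ _ hmx hmy' (hKnn η))
    · exact le_trans (hKle _ _ _ (by linarith) (by linarith) (by linarith) (by linarith) (hKnn η))
        (hKge _ _ _ hmx' hmy (hKnn η))
    · exact le_trans (hKle _ _ _ (by linarith) (by linarith) (by linarith) (by linarith) (hKnn η))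
        (hKge _ _ _ hmx hmy (hKnn η))
  -- claim W bound
  have claimWb : ∀ η : Config d N, |omg u x η - omg u y η| ≤ 2/m^2 := by
    intro η
    have h1 : ∀ (z : Torus d N), 0 < chi (u z) → m^2 ≤ chi (u z) → |bval (η z) - u z| ≤ 1 →
        |omg u z η| ≤ 1/m^2 := by
      intro z hz1 hz2 hz3
      rw [omg, abs_div, abs_of_pos hz1, div_le_div_iff₀ hz1 hm2]
      nlinarith [abs_nonneg (bval (η z) - u z)]
    have hbx : |bval (η x) - u x| ≤ 1 := by
      rw [abs_le]; cases hhx : η x <;> simp [bval] <;> constructor <;> linarith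
    have hby : |bval (η y) - u y| ≤ 1 := by
      rw [abs_le]; cases hhy : η y <;> simp [bval] <;> constructor <;> linarith
    have h2 := h1 x hχx0 hχx hbx
    have h3 := h1 y hχy0 hχy hby
    calc |omg u x η - omg u y η| ≤ |omg u x η| + |omg u y η| := abs_sub _ _
      _ ≤ 1/m^2 + 1/m^2 := add_le_add h2 h3
      _ = 2/m^2 := by ring
  -- main pointwise bound (multiplied by β)
  have claimMain : ∀ η : Config d N,
      β * (h η * (omg u x η - omg u y η) * bern u η * (f η - f (swapC x y η)))
      ≤ (β*β/2) * (Real.sqrt (f (swapC x y η)) - Real.sqrt (f η))^2 * bern u η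
        + (2/m^2)^2 * (h η)^2 * (f η + f (swapC x y η)) * bern u η := by
    intro η
    have hs2 : (Real.sqrt (f η))^2 = f η := Real.sq_sqrt (hf η)
    have ht2 : (Real.sqrt (f (swapC x y η)))^2 = f (swapC x y η) := Real.sq_sqrt (hf _)
    set s := Real.sqrt (f η) with hsdef
    set t := Real.sqrt (f (swapC x y η)) with htdef
    have hW2 : (omg u x η - omg u y η)^2 ≤ (2/m^2)^2 := by
      rw [← sq_abs]
      apply pow_le_pow_left₀ (abs_nonneg _) (claimWb η)
    have core : β * (h η * (omg u x η - omg u y η) * (s^2 - t^2))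
        ≤ (β*β/2) * (t - s)^2 + (2/m^2)^2 * (h η)^2 * (s^2 + t^2) := by
      nlinarith [sq_nonneg (β*(s - t) - h η * (omg u x η - omg u y η) * (s + t)),
        mul_nonneg (sq_nonneg (h η)) (sq_nonneg (s + t)),
        mul_nonneg (mul_nonneg (sq_nonneg (h η)) (sq_nonneg (s - t)))
          (sub_nonneg.mpr hW2),
        mul_nonneg (sub_nonneg.mpr hW2) (mul_nonneg (sq_nonneg (h η)) (sq_nonneg (s + t))),
        mul_nonneg (mul_nonneg (sq_nonneg (2/m^2)) (sq_nonneg (h η))) (sq_nonneg (s - t))]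
    calc β * (h η * (omg u x η - omg u y η) * bern u η * (f η - f (swapC x y η)))
        = (β * (h η * (omg u x η - omg u y η) * (s^2 - t^2))) * bern u η := by
          rw [hs2, ht2]; ring
      _ ≤ ((β*β/2) * (t - s)^2 + (2/m^2)^2 * (h η)^2 * (s^2 + t^2)) * bern u η :=
          mul_le_mul_of_nonneg_right core (hbnn η)
      _ = (β*β/2) * (t - s)^2 * bern u η
            + (2/m^2)^2 * (h η)^2 * (f η + f (swapC x y η)) * bern u η := by
          rw [← hs2, ← ht2]; ring
  -- notation for the sums
  set S : ℝ := ∑ η : Config d N, h η * (omg u x η - omg u y η) * f η * bern u η with hSdef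
  set D : ℝ := dirKxy x y (fun η => Real.sqrt (f η)) (bern u) with hDdef
  set S2 : ℝ := ∑ η : Config d N, (h η)^2 * f η * bern u η with hS2def
  set S1 : ℝ := ∑ η : Config d N, |h η| * f η * bern u η with hS1def
  set R : ℝ := (1/2) * ∑ η : Config d N, h η * f (swapC x y η) *
      ((omg u x η - omg u y η) * bern u η
        + (omg u x (swapC x y η) - omg u y (swapC x y η)) * bern u (swapC x y η)) with hRdef
  have hS2nn : 0 ≤ S2 := Finset.sum_nonneg fun η _ =>
    mul_nonneg (mul_nonneg (sq_nonneg _) (hf η)) (hbnn η)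
  have hS1nn : 0 ≤ S1 := Finset.sum_nonneg fun η _ =>
    mul_nonneg (mul_nonneg (abs_nonneg _) (hf η)) (hbnn η)
  refine ⟨R, ?_, ?_⟩
  · -- the main inequality
    rw [← mul_le_mul_iff_right₀ hβ]
    have hrhs : β * (β * D + (4 / m^6 / β) * S2 + R) = β*β*D + (4/m^6)*S2 + β*R := by
      field_simp
    rw [hrhs]
    -- reflected form of S
    have hS2' : S = ∑ η : Config d N,
        h η * (omg u x (swapC x y η) - omg u y (swapC x y η)) * f (swapC x y η)
          * bern u (swapC x y η) := by
      rw [hSdef]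
      rw [← sum_swapC x y (fun η => h η * (omg u x η - omg u y η) * f η * bern u η)]
      exact Finset.sum_congr rfl fun η _ => by rw [hsw η]
    -- splitting identity
    have hsplit : 2 * S = (∑ η : Config d N,
        h η * (omg u x η - omg u y η) * bern u η * (f η - f (swapC x y η))) + 2 * R := by
      rw [hRdef]
      rw [two_mul S]
      nth_rewrite 2 [hS2']
      rw [hSdef, ← Finset.sum_add_distrib]
      rw [show (2:ℝ) * ((1/2) * ∑ η : Config d N, h η * f (swapC x y η) *
          ((omg u x η - omg u y η) * bern u η
            + (omg u x (swapC x y η) - omg u y (swapC x y η)) * bern u (swapC x y η)))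
        = ∑ η : Config d N, h η * f (swapC x y η) *
          ((omg u x η - omg u y η) * bern u η
            + (omg u x (swapC x y η) - omg u y (swapC x y η)) * bern u (swapC x y η)) by ring]
      rw [← Finset.sum_add_distrib]
      exact Finset.sum_congr rfl fun η _ => by ring
    -- summed main bound
    have hDsum : (∑ η : Config d N,
        (Real.sqrt (f (swapC x y η)) - Real.sqrt (f η))^2 * bern u η) = 4 * D := by
      rw [hDdef, dirKxy]
      ring
    have hsumM : β * (∑ η : Config d N,
        h η * (omg u x η - omg u y η) * bern u η * (f η - f (swapC x y η)))
        ≤ 2*(β*β)*D + (2/m^2)^2 * (S2 + ∑ η : Config d N,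
            (h η)^2 * f (swapC x y η) * bern u η) := by
      calc β * (∑ η : Config d N,
            h η * (omg u x η - omg u y η) * bern u η * (f η - f (swapC x y η)))
          = ∑ η : Config d N,
            β * (h η * (omg u x η - omg u y η) * bern u η * (f η - f (swapC x y η))) :=
            Finset.mul_sum _ _ _
        _ ≤ ∑ η : Config d N,
            ((β*β/2) * (Real.sqrt (f (swapC x y η)) - Real.sqrt (f η))^2 * bern u η
              + (2/m^2)^2 * (h η)^2 * (f η + f (swapC x y η)) * bern u η) :=
            Finset.sum_le_sum fun η _ => claimMain η
        _ = (β*β/2) * (∑ η : Config d N,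
              (Real.sqrt (f (swapC x y η)) - Real.sqrt (f η))^2 * bern u η)
            + (2/m^2)^2 * ((∑ η : Config d N, (h η)^2 * f η * bern u η)
              + ∑ η : Config d N, (h η)^2 * f (swapC x y η) * bern u η) := by
            rw [Finset.sum_add_distrib]
            congr 1
            · rw [Finset.mul_sum]
              exact Finset.sum_congr rfl fun η _ => by ring
            · rw [mul_add, Finset.mul_sum, Finset.mul_sum, ← Finset.sum_add_distrib]
              exact Finset.sum_congr rfl fun η _ => by ring
        _ = 2*(β*β)*D + (2/m^2)^2 * (S2 + ∑ η : Config d N,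
              (h η)^2 * f (swapC x y η) * bern u η) := by
            rw [hDsum, ← hS2def]
            ring
    -- reflected second moment
    have hS2T : (∑ η : Config d N, (h η)^2 * f (swapC x y η) * bern u η)
        ≤ (1/m^2) * S2 := by
      calc (∑ η : Config d N, (h η)^2 * f (swapC x y η) * bern u η)
          ≤ ∑ η : Config d N, (h η)^2 * f (swapC x y η) * ((1/m^2) * bern u (swapC x y η)) :=
            Finset.sum_le_sum fun η _ =>
              mul_le_mul_of_nonneg_left (claimRatio η) (mul_nonneg (sq_nonneg _) (hf _))
        _ = (1/m^2) * ∑ η : Config d N, (h η)^2 * f (swapC x y η) * bern u (swapC x y η) := by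
            rw [Finset.mul_sum]
            exact Finset.sum_congr rfl fun η _ => by ring
        _ = (1/m^2) * S2 := by
            congr 1
            rw [hS2def]
            rw [← sum_swapC x y (fun η => (h η)^2 * f η * bern u η)]
            exact Finset.sum_congr rfl fun η _ => by rw [hsw η]
    have hcoef : (2/m^2)^2 * (1 + 1/m^2) ≤ 2 * (4/m^6) := by
      have h1 : (2/m^2)^2 * (1 + 1/m^2) = (4*m^2 + 4)/m^6 := by
        field_simp
        ring
      have h2 : 2 * (4/m^6) = 8/m^6 := by ring
      rw [h1, h2]
      gcongr
      nlinarith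
    -- combine
    have hsplitβ : β * (2 * S) = β * ((∑ η : Config d N,
        h η * (omg u x η - omg u y η) * bern u η * (f η - f (swapC x y η))) + 2 * R) := by
      rw [hsplit]
    have hA : (2/m^2)^2 * (S2 + ∑ η : Config d N, (h η)^2 * f (swapC x y η) * bern u η)
        ≤ (2/m^2)^2 * (S2 + (1/m^2) * S2) :=
      mul_le_mul_of_nonneg_left (by linarith) (by positivity)
    have hB : (2/m^2)^2 * (S2 + (1/m^2) * S2) ≤ 2 * (4/m^6) * S2 := by
      have h3 : (2/m^2)^2 * (S2 + (1/m^2) * S2) = ((2/m^2)^2 * (1 + 1/m^2)) * S2 := by ring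
      rw [h3]
      exact mul_le_mul_of_nonneg_right hcoef hS2nn
    nlinarith [hsumM, hA, hB, hsplitβ]
  · -- the error bound
    have step1 : |R| ≤ (1/2) * ∑ η : Config d N, |h η| * f (swapC x y η) *
        |(omg u x η - omg u y η) * bern u η
          + (omg u x (swapC x y η) - omg u y (swapC x y η)) * bern u (swapC x y η)| := by
      rw [hRdef, abs_mul, abs_of_nonneg (by norm_num : (0:ℝ) ≤ 1/2)]
      apply mul_le_mul_of_nonneg_left _ (by norm_num : (0:ℝ) ≤ 1/2)
      calc |∑ η : Config d N, h η * f (swapC x y η) *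
            ((omg u x η - omg u y η) * bern u η
              + (omg u x (swapC x y η) - omg u y (swapC x y η)) * bern u (swapC x y η))|
          ≤ ∑ η : Config d N, |h η * f (swapC x y η) *
            ((omg u x η - omg u y η) * bern u η
              + (omg u x (swapC x y η) - omg u y (swapC x y η)) * bern u (swapC x y η))| :=
            Finset.abs_sum_le_sum_abs _ _
        _ = ∑ η : Config d N, |h η| * f (swapC x y η) *
            |(omg u x η - omg u y η) * bern u η
              + (omg u x (swapC x y η) - omg u y (swapC x y η)) * bern u (swapC x y η)| := by
            exact Finset.sum_congr rfl fun η _ => by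
              rw [abs_mul, abs_mul, abs_of_nonneg (hf _)]
    have step2 : (∑ η : Config d N, |h η| * f (swapC x y η) *
        |(omg u x η - omg u y η) * bern u η
          + (omg u x (swapC x y η) - omg u y (swapC x y η)) * bern u (swapC x y η)|)
        ≤ (2/m^2) * |u x - u y| * S1 := by
      calc (∑ η : Config d N, |h η| * f (swapC x y η) *
            |(omg u x η - omg u y η) * bern u η
              + (omg u x (swapC x y η) - omg u y (swapC x y η)) * bern u (swapC x y η)|)
          ≤ ∑ η : Config d N, |h η| * f (swapC x y η)
              * ((2/m^2) * |u x - u y| * bern u (swapC x y η)) :=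
            Finset.sum_le_sum fun η _ =>
              mul_le_mul_of_nonneg_left (claimE η) (mul_nonneg (abs_nonneg _) (hf _))
        _ = (2/m^2) * |u x - u y| * ∑ η : Config d N,
              |h η| * f (swapC x y η) * bern u (swapC x y η) := by
            rw [Finset.mul_sum]
            exact Finset.sum_congr rfl fun η _ => by ring
        _ = (2/m^2) * |u x - u y| * S1 := by
            congr 1
            rw [hS1def]
            rw [← sum_swapC x y (fun η => |h η| * f η * bern u η)]
            exact Finset.sum_congr rfl fun η _ => by rw [hsw η]
    have hc2 : (1/2) * ((2/m^2) * |u x - u y| * S1) ≤ (4/m^6) * |u x - u y| * S1 := by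
      have hmono : 1/m^2 ≤ 4/m^6 := by
        rw [div_le_div_iff₀ hm2 (by positivity)]
        nlinarith [pow_le_one₀ (n := 4) hm0.le hm1, sq_nonneg m]
      have habsnn : 0 ≤ |u x - u y| * S1 := mul_nonneg (abs_nonneg _) hS1nn
      calc (1/2) * ((2/m^2) * |u x - u y| * S1) = (1/m^2) * (|u x - u y| * S1) := by ring
        _ ≤ (4/m^6) * (|u x - u y| * S1) := mul_le_mul_of_nonneg_right hmono habsnn
        _ = (4/m^6) * |u x - u y| * S1 := by ring
    calc |R| ≤ (1/2) * ((2/m^2) * |u x - u y| * S1) := by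
          apply le_trans step1
          apply mul_le_mul_of_nonneg_left step2 (by norm_num)
      _ ≤ (4/m^6) * |u x - u y| * S1 := hc2
end
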